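/- Let r : ℝ → ℝ be a continuous 1-periodic function that is not constant, and let q ∈ ℝ with q ≠ 0. Then there exists a positive, 1-periodic, C² function D : ℝ → ℝ such that whenever (k_q, ψ) is a principal eigenpair of L_q^0[r;D] and (k₀, φ) is a principal eigenpair of L_0^0[r;D], one has k_q > k₀. -/

import Mathlib

open Real MeasureTheory Set Filter Topology

noncomputable section


/-! ### The C² kernel `m3 t = (max t 0)^3` -/

def m3 (t : ℝ) : ℝ := (max t 0)^3
def m3d (t : ℝ) : ℝ := 3 * (max t 0)^2
def m3dd (t : ℝ) : ℝ := 6 * max t 0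

lemma m3_nonneg (t : ℝ) : 0 ≤ m3 t :=
  pow_nonneg (le_max_right _ _) 3

lemma m3_of_nonpos {t : ℝ} (ht : t ≤ 0) : m3 t = 0 := by
  simp [m3, max_eq_right ht]

lemma m3_pos {t : ℝ} (ht : 0 < t) : 0 < m3 t := by
  simp only [m3, max_eq_left ht.le]
  positivity

lemma hasDerivAt_m3 (t : ℝ) : HasDerivAt m3 (m3d t) t := by
  rcases lt_trichotomy t 0 with h | h | h
  · have hev : m3 =ᶠ[𝓝 t] (fun _ => (0:ℝ)) := by
      filter_upwards [Iio_mem_nhds h] with s hs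
      exact m3_of_nonpos (mem_Iio.mp hs).le
    have h0 : HasDerivAt (fun _ : ℝ => (0:ℝ)) 0 t := hasDerivAt_const t 0
    have h' := h0.congr_of_eventuallyEq hev
    simpa [m3d, max_eq_right h.le] using h'
  · subst h
    have key : HasDerivAt m3 0 0 := by
      rw [hasDerivAt_iff_tendsto_slope]
      have hb : ∀ s : ℝ, s ≠ 0 → |slope m3 0 s| ≤ s^2 := by
        intro s hs
        rw [slope_def_field, m3_of_nonpos le_rfl, sub_zero, sub_zero]
        rcases le_or_gt s 0 with h1 | h1
        · rw [m3_of_nonpos h1]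
          simp
          positivity
        · have h2 : m3 s = s^3 := by simp [m3, max_eq_left h1.le]
          rw [h2, show s^3/s = s^2 by field_simp, abs_of_nonneg (sq_nonneg s)]
      have hsq : Tendsto (fun s : ℝ => s^2) (𝓝[≠] (0:ℝ)) (𝓝 0) := by
        have := (continuous_pow 2).tendsto (0:ℝ)
        simpa using this.mono_left nhdsWithin_le_nhds
      apply squeeze_zero_norm' _ hsq
      filter_upwards [self_mem_nhdsWithin] with s hs
      simpa [Real.norm_eq_abs] using hb s hs
    simpa [m3d] using key
  · have hev : m3 =ᶠ[𝓝 t] (fun s => s^3) := by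
      filter_upwards [Ioi_mem_nhds h] with s hs
      simp [m3, max_eq_left (mem_Ioi.mp hs).le]
    have h0 : HasDerivAt (fun s : ℝ => s^3) (3 * t^2) t := by
      simpa using hasDerivAt_pow 3 t
    have h' := h0.congr_of_eventuallyEq hev
    simpa [m3d, max_eq_left h.le] using h'

lemma hasDerivAt_m3d (t : ℝ) : HasDerivAt m3d (m3dd t) t := by
  rcases lt_trichotomy t 0 with h | h | h
  · have hev : m3d =ᶠ[𝓝 t] (fun _ => (0:ℝ)) := by
      filter_upwards [Iio_mem_nhds h] with s hs
      simp [m3d, max_eq_right (mem_Iio.mp hs).le]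
    have h0 : HasDerivAt (fun _ : ℝ => (0:ℝ)) 0 t := hasDerivAt_const t 0
    have h' := h0.congr_of_eventuallyEq hev
    simpa [m3dd, max_eq_right h.le] using h'
  · subst h
    have key : HasDerivAt m3d 0 0 := by
      rw [hasDerivAt_iff_tendsto_slope]
      have hb : ∀ s : ℝ, s ≠ 0 → |slope m3d 0 s| ≤ 3 * |s| := by
        intro s hs
        rw [slope_def_field]
        have h00 : m3d 0 = 0 := by simp [m3d]
        rw [h00, sub_zero, sub_zero]
        rcases le_or_gt s 0 with h1 | h1
        · have : m3d s = 0 := by simp [m3d, max_eq_right h1]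
          rw [this]
          simp [abs_nonneg]
        · have h2 : m3d s = 3 * s^2 := by simp [m3d, max_eq_left h1.le]
          rw [h2, show 3 * s^2/s = 3 * s by field_simp,
            abs_of_nonneg (by positivity : (0:ℝ) ≤ 3 * s), abs_of_pos h1]
      have hsq : Tendsto (fun s : ℝ => 3 * |s|) (𝓝[≠] (0:ℝ)) (𝓝 0) := by
        have h3 : Tendsto (fun s : ℝ => 3 * |s|) (𝓝 0) (𝓝 0) := by
          have := (continuous_abs.tendsto (0:ℝ)).const_mul (3:ℝ)
          simpa using this
        exact h3.mono_left nhdsWithin_le_nhds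
      apply squeeze_zero_norm' _ hsq
      filter_upwards [self_mem_nhdsWithin] with s hs
      simpa [Real.norm_eq_abs] using hb s hs
    simpa [m3dd] using key
  · have hev : m3d =ᶠ[𝓝 t] (fun s => 3 * s^2) := by
      filter_upwards [Ioi_mem_nhds h] with s hs
      simp [m3d, max_eq_left (mem_Ioi.mp hs).le]
    have h0 : HasDerivAt (fun s : ℝ => 3 * s^2) (6 * t) t := by
      have h := (hasDerivAt_pow 2 t).const_mul (3:ℝ)
      norm_num at h
      rw [show (6:ℝ) * t = 3 * (2 * t) by ring]
      exact h
    have h' := h0.congr_of_eventuallyEq hev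
    simpa [m3dd, max_eq_left h.le] using h'

lemma continuous_m3dd : Continuous m3dd := by
  unfold m3dd; fun_prop

lemma continuous_m3 : Continuous m3 := by
  unfold m3; fun_prop

lemma continuous_m3d : Continuous m3d := by
  unfold m3d; fun_prop

/-! ### ContDiff from explicit derivative chains -/

lemma contDiff_two_of_hasDerivAt {f f1 f2 : ℝ → ℝ}
    (h1 : ∀ x, HasDerivAt f (f1 x) x) (h2 : ∀ x, HasDerivAt f1 (f2 x) x)
    (h2c : Continuous f2) : ContDiff ℝ 2 f := by
  have hdf : deriv f = f1 := funext fun x => (h1 x).deriv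
  have hdf1 : deriv f1 = f2 := funext fun x => (h2 x).deriv
  have : (2 : WithTop ℕ∞) = (1 : WithTop ℕ∞) + 1 := by norm_num
  rw [this, contDiff_succ_iff_deriv]
  refine ⟨fun x => (h1 x).differentiableAt, fun h => absurd h (by norm_num), ?_⟩
  rw [hdf]
  have : (1 : WithTop ℕ∞) = (0 : WithTop ℕ∞) + 1 := by norm_num
  rw [this, contDiff_succ_iff_deriv]
  refine ⟨fun x => (h2 x).differentiableAt, fun h => absurd h (by norm_num), ?_⟩
  rw [hdf1]
  exact contDiff_zero.mpr h2c

lemma deriv_differentiable_of_contDiff2 {f : ℝ → ℝ} (hf : ContDiff ℝ 2 f) :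
    Differentiable ℝ (deriv f) := by
  have : (2 : WithTop ℕ∞) = (1 : WithTop ℕ∞) + 1 := by norm_num
  rw [this, contDiff_succ_iff_deriv] at hf
  exact hf.2.2.differentiable one_ne_zero

lemma contDiff2_deriv_contDiff1 {f : ℝ → ℝ} (hf : ContDiff ℝ 2 f) :
    ContDiff ℝ 1 (deriv f) := by
  have : (2 : WithTop ℕ∞) = (1 : WithTop ℕ∞) + 1 := by norm_num
  rw [this, contDiff_succ_iff_deriv] at hf
  exact hf.2.2

/-! ### Extrema of periodic functions -/

lemma periodic_exists_min {m : ℝ → ℝ} (hc : Continuous m) (hp : Function.Periodic m 1) :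
    ∃ x₀, ∀ y, m x₀ ≤ m y := by
  obtain ⟨x₀, _, hmin⟩ := isCompact_Icc.exists_isMinOn (s := Icc (0:ℝ) 1)
    (nonempty_Icc.mpr zero_le_one) hc.continuousOn
  refine ⟨x₀, fun y => ?_⟩
  have h1 : m (Int.fract y) = m y := by
    have h := hp.sub_int_mul_eq (x := y) ⌊y⌋
    rw [mul_one] at h
    rw [Int.fract]
    exact h
  have h2 : Int.fract y ∈ Icc (0:ℝ) 1 :=
    ⟨Int.fract_nonneg y, (Int.fract_lt_one y).le⟩
  calc m x₀ ≤ m (Int.fract y) := hmin h2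
    _ = m y := h1

lemma periodic_exists_max {m : ℝ → ℝ} (hc : Continuous m) (hp : Function.Periodic m 1) :
    ∃ x₀, ∀ y, m y ≤ m x₀ := by
  have hpn : Function.Periodic (fun x => -m x) 1 := fun x => by simp [hp x]
  obtain ⟨x₀, h⟩ := periodic_exists_min (m := fun x => -m x) (by fun_prop) hpn
  exact ⟨x₀, fun y => by have := h y; linarith⟩

/-! ### Second derivative test at a global extremum -/

lemma deriv2_nonneg_of_min {f : ℝ → ℝ} (hf : ContDiff ℝ 2 f) {x₀ : ℝ}
    (hmin : ∀ y, f x₀ ≤ f y) : 0 ≤ deriv (deriv f) x₀ := by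
  by_contra hneg
  push_neg at hneg
  set f' := deriv f with hf'
  have hf'c : Continuous (deriv f') := (contDiff2_deriv_contDiff1 hf).continuous_deriv le_rfl
  have hlt : ∀ᶠ x in 𝓝 x₀, deriv f' x < 0 := by
    have : Tendsto (deriv f') (𝓝 x₀) (𝓝 (deriv f' x₀)) := hf'c.tendsto x₀
    exact this.eventually_lt_const hneg
  obtain ⟨δ, hδpos, hδ⟩ := Metric.eventually_nhds_iff.mp hlt
  have hd0 : f' x₀ = 0 := by
    have hloc : IsLocalMin f x₀ := Filter.Eventually.of_forall hmin
    exact hloc.deriv_eq_zero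
  -- f' is strictly decreasing on [x₀, x₀ + δ/2]
  have hI : StrictAntiOn f' (Icc x₀ (x₀ + δ/2)) := by
    apply strictAntiOn_of_deriv_neg (convex_Icc _ _)
    · exact ((contDiff2_deriv_contDiff1 hf).continuous).continuousOn
    · intro x hx
      rw [interior_Icc] at hx
      apply hδ
      rw [Real.dist_eq, abs_of_nonneg (by linarith [hx.1])]
      linarith [hx.2]
  have hf'neg : ∀ x ∈ Ioo x₀ (x₀ + δ/2), deriv f x < 0 := by
    intro x hx
    have := hI (left_mem_Icc.mpr (by linarith)) ⟨hx.1.le, hx.2.le⟩ hx.1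
    rw [hd0] at this
    exact this
  have hanti : StrictAntiOn f (Icc x₀ (x₀ + δ/2)) := by
    apply strictAntiOn_of_deriv_neg (convex_Icc _ _) hf.continuous.continuousOn
    intro x hx
    rw [interior_Icc] at hx
    exact hf'neg x hx
  have : f (x₀ + δ/2) < f x₀ :=
    hanti (left_mem_Icc.mpr (by linarith)) (right_mem_Icc.mpr (by linarith)) (by linarith)
  exact absurd (hmin (x₀ + δ/2)) (not_le.mpr this)

lemma deriv2_nonpos_of_max {f : ℝ → ℝ} (hf : ContDiff ℝ 2 f) {x₀ : ℝ}
    (hmax : ∀ y, f y ≤ f x₀) : deriv (deriv f) x₀ ≤ 0 := by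
  have h1 : ∀ x, deriv (fun y => -f y) x = -deriv f x := fun x => deriv.neg
  have h2 : deriv (deriv (fun y => -f y)) x₀ = -deriv (deriv f) x₀ := by
    have : deriv (fun y => -f y) = fun x => -deriv f x := funext h1
    rw [this, deriv.fun_neg]
  have := deriv2_nonneg_of_min (f := fun y => -f y) hf.neg (fun y => neg_le_neg (hmax y))
  rw [h2] at this
  linarith

/-! ### FTC and periodic primitives -/

lemma hasDerivAt_primitive {f : ℝ → ℝ} (hf : Continuous f) (x : ℝ) :
    HasDerivAt (fun u => ∫ t in (0:ℝ)..u, f t) (f x) x :=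
  intervalIntegral.integral_hasDerivAt_right (hf.intervalIntegrable _ _)
    (hf.stronglyMeasurableAtFilter _ _) hf.continuousAt

lemma primitive_periodic {f : ℝ → ℝ} (hf : Continuous f) (hper : Function.Periodic f 1)
    (hzero : (∫ t in (0:ℝ)..1, f t) = 0) :
    Function.Periodic (fun u => ∫ t in (0:ℝ)..u, f t) 1 := by
  intro x
  have h1 : (∫ t in (0:ℝ)..(x+1), f t) = (∫ t in (0:ℝ)..x, f t) + ∫ t in x..(x+1), f t :=
    (intervalIntegral.integral_add_adjacent_intervals (hf.intervalIntegrable _ _)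
      (hf.intervalIntegrable _ _)).symm
  have h2 : (∫ t in x..(x+1), f t) = ∫ t in (0:ℝ)..(0+1), f t :=
    hper.intervalIntegral_add_eq x 0
  simp only [zero_add] at h2
  show (∫ t in (0:ℝ)..(x+1), f t) = ∫ t in (0:ℝ)..x, f t
  rw [h1, h2, hzero, add_zero]

/-! ### Eigenvalue comparison via test functions -/

lemma eig_ge {Dd b c g ψ : ℝ → ℝ} {k κ : ℝ}
    (hD : ∀ x, 0 < Dd x)
    (hg : ContDiff ℝ 2 g) (hgpos : ∀ x, 0 < g x) (hgper : Function.Periodic g 1)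
    (hψ : ContDiff ℝ 2 ψ) (hψpos : ∀ x, 0 < ψ x) (hψper : Function.Periodic ψ 1)
    (heig : ∀ x, Dd x * deriv (deriv ψ) x + b x * deriv ψ x + c x * ψ x = k * ψ x)
    (hlb : ∀ x, κ * g x ≤ Dd x * deriv (deriv g) x + b x * deriv g x + c x * g x) :
    κ ≤ k := by
  set m := fun x => ψ x / g x with hm
  have hgne : ∀ x, g x ≠ 0 := fun x => (hgpos x).ne'
  have hmC : ContDiff ℝ 2 m := hψ.div hg hgne
  have hmper : Function.Periodic m 1 := fun x => by simp only [hm, hψper x, hgper x]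
  obtain ⟨x₀, hmin⟩ := periodic_exists_min hmC.continuous hmper
  have hloc : IsLocalMin m x₀ := Filter.Eventually.of_forall hmin
  have hm'0 : deriv m x₀ = 0 := hloc.deriv_eq_zero
  have hm''0 : 0 ≤ deriv (deriv m) x₀ := deriv2_nonneg_of_min hmC hmin
  have hψeq : ψ = fun x => m x * g x := funext fun x => (div_mul_cancel₀ (ψ x) (hgne x)).symm
  have hmdiff : Differentiable ℝ m := hmC.differentiable (by norm_num)
  have hgdiff : Differentiable ℝ g := hg.differentiable (by norm_num)
  have hm'diff : Differentiable ℝ (deriv m) := deriv_differentiable_of_contDiff2 hmC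
  have hg'diff : Differentiable ℝ (deriv g) := deriv_differentiable_of_contDiff2 hg
  have hd1 : deriv ψ = fun x => deriv m x * g x + m x * deriv g x := by
    funext x
    rw [hψeq]
    exact deriv_mul (hmdiff x) (hgdiff x)
  have hd2 : deriv (deriv ψ) x₀ = (deriv (deriv m) x₀ * g x₀ + deriv m x₀ * deriv g x₀)
      + (deriv m x₀ * deriv g x₀ + m x₀ * deriv (deriv g) x₀) := by
    rw [hd1]
    rw [deriv_fun_add (f := fun y => deriv m y * g y) (g := fun y => m y * deriv g y) ((hm'diff x₀).mul (hgdiff x₀)) ((hmdiff x₀).mul (hg'diff x₀)),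
      deriv_fun_mul (hm'diff x₀) (hgdiff x₀), deriv_fun_mul (hmdiff x₀) (hg'diff x₀)]
  have heq := heig x₀
  rw [hd2, hm'0] at heq
  have hψx : ψ x₀ = m x₀ * g x₀ := by rw [hψeq]
  have hdψx : deriv ψ x₀ = m x₀ * deriv g x₀ := by rw [hd1]; simp [hm'0]
  rw [hψx, hdψx] at heq
  -- heq : Dd x₀ * ((m'' * g + 0) + (0 + m * g'')) + b x₀ * (m * g') + c x₀ * (m * g) = k * (m * g)
  have hmx : 0 < m x₀ := div_pos (hψpos x₀) (hgpos x₀)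
  have hlbx := hlb x₀
  have hDpos := hD x₀
  have hgx := hgpos x₀
  nlinarith [mul_pos hmx hgx, mul_nonneg (mul_nonneg (hD x₀).le hm''0) (hgpos x₀).le,
    mul_le_mul_of_nonneg_left hlbx hmx.le]

lemma eig_le {Dd b c h ψ : ℝ → ℝ} {k κ : ℝ}
    (hD : ∀ x, 0 < Dd x)
    (hh : ContDiff ℝ 2 h) (hhpos : ∀ x, 0 < h x) (hhper : Function.Periodic h 1)
    (hψ : ContDiff ℝ 2 ψ) (hψpos : ∀ x, 0 < ψ x) (hψper : Function.Periodic ψ 1)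
    (heig : ∀ x, Dd x * deriv (deriv ψ) x + b x * deriv ψ x + c x * ψ x = k * ψ x)
    (hub : ∀ x, Dd x * deriv (deriv h) x + b x * deriv h x + c x * h x ≤ κ * h x) :
    k ≤ κ := by
  set m := fun x => ψ x / h x with hm
  have hhne : ∀ x, h x ≠ 0 := fun x => (hhpos x).ne'
  have hmC : ContDiff ℝ 2 m := hψ.div hh hhne
  have hmper : Function.Periodic m 1 := fun x => by simp only [hm, hψper x, hhper x]
  obtain ⟨x₀, hmax⟩ := periodic_exists_max hmC.continuous hmper
  have hloc : IsLocalMax m x₀ := Filter.Eventually.of_forall hmax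
  have hm'0 : deriv m x₀ = 0 := hloc.deriv_eq_zero
  have hm''0 : deriv (deriv m) x₀ ≤ 0 := deriv2_nonpos_of_max hmC hmax
  have hψeq : ψ = fun x => m x * h x := funext fun x => (div_mul_cancel₀ (ψ x) (hhne x)).symm
  have hmdiff : Differentiable ℝ m := hmC.differentiable (by norm_num)
  have hhdiff : Differentiable ℝ h := hh.differentiable (by norm_num)
  have hm'diff : Differentiable ℝ (deriv m) := deriv_differentiable_of_contDiff2 hmC
  have hh'diff : Differentiable ℝ (deriv h) := deriv_differentiable_of_contDiff2 hh
  have hd1 : deriv ψ = fun x => deriv m x * h x + m x * deriv h x := by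
    funext x
    rw [hψeq]
    exact deriv_mul (hmdiff x) (hhdiff x)
  have hd2 : deriv (deriv ψ) x₀ = (deriv (deriv m) x₀ * h x₀ + deriv m x₀ * deriv h x₀)
      + (deriv m x₀ * deriv h x₀ + m x₀ * deriv (deriv h) x₀) := by
    rw [hd1]
    rw [deriv_fun_add (f := fun y => deriv m y * h y) (g := fun y => m y * deriv h y) ((hm'diff x₀).mul (hhdiff x₀)) ((hmdiff x₀).mul (hh'diff x₀)),
      deriv_fun_mul (hm'diff x₀) (hhdiff x₀), deriv_fun_mul (hmdiff x₀) (hh'diff x₀)]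
  have heq := heig x₀
  rw [hd2, hm'0] at heq
  have hψx : ψ x₀ = m x₀ * h x₀ := by rw [hψeq]
  have hdψx : deriv ψ x₀ = m x₀ * deriv h x₀ := by rw [hd1]; simp [hm'0]
  rw [hψx, hdψx] at heq
  have hmx : 0 < m x₀ := div_pos (hψpos x₀) (hhpos x₀)
  have hubx := hub x₀
  have hDpos := hD x₀
  have hhx := hhpos x₀
  nlinarith [mul_pos hmx hhx, mul_nonneg (mul_nonneg (hD x₀).le (neg_nonneg.mpr hm''0)) (hhpos x₀).le,
    mul_le_mul_of_nonneg_left hubx hmx.le]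

/-! ### Core algebraic identities -/

lemma core_alg_q (q A a d B f S S1 p1 p2 rx rb3 : ℝ) (hA : A ≠ 0) (had : a * d = 1)
    (hS1 : S1 = f * d + (q-1)*p1*S) (hf : f = rb3 - rx) :
    (A*a) * (((-q*p2 + S1/A) * B + (-q*p1 + S/A) * ((-q*p1+S/A)*B)))
      + ((1+q)*(A*p1*a)) * ((-q*p1+S/A)*B)
      + (q*(A*(p2+p1^2)*a) + rx)*B
    = (rb3 + a*S^2/A)*B := by
  subst hS1 hf
  field_simp
  linear_combination (A * ((rb3 - rx) * B)) * had

lemma core_alg_0 (A a d B T T1 p1 p2 rx rb : ℝ) (hA : A ≠ 0) (had : a * d = 1)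
    (hT1 : T1 = (rb - rx)*d - p1*T) :
    (A*a) * ((T1/A)*B + (T/A)*((T/A)*B))
      + ((A*p1*a)) * ((T/A)*B)
      + rx*B
    = (rb + a*T^2/A)*B := by
  subst hT1
  field_simp
  linear_combination (A * (rb - rx) * B) * had

lemma exists_above_avg {r : ℝ → ℝ} (hr : Continuous r) (hrper : Function.Periodic r 1)
    (hrnc : ¬ ∃ c, ∀ x, r x = c) : ∃ x₀, (∫ t in (0:ℝ)..1, r t) < r x₀ := by
  set rb := ∫ t in (0:ℝ)..1, r t with hrb
  by_contra hcon
  push_neg at hcon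
  have h1 : ∃ x₁, r x₁ ≠ rb := by
    by_contra h2
    push_neg at h2
    exact hrnc ⟨rb, h2⟩
  obtain ⟨x₁, hx₁⟩ := h1
  have hx1lt : r x₁ < rb := (hcon x₁).lt_of_ne hx₁
  set ζ := (rb - r x₁)/2 with hζdef
  have hζ : 0 < ζ := by simp only [hζdef]; linarith
  obtain ⟨d0, hd0pos, hd0⟩ := Metric.continuousAt_iff.mp (hr.continuousAt (x := x₁)) ζ hζ
  set d := min (d0/2) 4⁻¹ with hddef
  have hdpos : 0 < d := lt_min (by linarith) (by norm_num)
  have hd14 : d ≤ 4⁻¹ := min_le_right _ _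
  have window : ∀ y, |y - x₁| ≤ d → ζ ≤ rb - r y := by
    intro y hy
    have h2 : dist y x₁ < d0 := by
      rw [Real.dist_eq]
      calc |y - x₁| ≤ d := hy
        _ ≤ d0/2 := min_le_left _ _
        _ < d0 := by linarith
    have h3 := hd0 h2
    rw [Real.dist_eq] at h3
    have h4 : r y < r x₁ + ζ := by
      have := abs_lt.mp h3
      linarith [this.2]
    simp only [hζdef] at *
    linarith
  -- the function rb - r
  have hcont : Continuous (fun t => rb - r t) := by fun_prop
  have hper0 : Function.Periodic (fun t => rb - r t) 1 := fun x => by simp [hrper x]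
  have hzero : (∫ t in (x₁ - 2⁻¹)..(x₁ + 2⁻¹), (rb - r t)) = 0 := by
    have heq := hper0.intervalIntegral_add_eq (x₁ - 2⁻¹) 0
    rw [show x₁ - 2⁻¹ + 1 = x₁ + 2⁻¹ by ring, zero_add] at heq
    have h01 : (∫ t in (0:ℝ)..1, (rb - r t)) = 0 := by
      rw [intervalIntegral.integral_sub (continuous_const.intervalIntegrable _ _)
        (hr.intervalIntegrable _ _)]
      simp [hrb]
    rw [heq, h01]
  have hint : ∀ a b : ℝ, IntervalIntegrable (fun t => rb - r t) volume a b :=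
    fun a b => hcont.intervalIntegrable _ _
  have hsplit : (∫ t in (x₁ - 2⁻¹)..(x₁ + 2⁻¹), (rb - r t))
      = (∫ t in (x₁ - 2⁻¹)..(x₁ - d), (rb - r t)) + (∫ t in (x₁ - d)..(x₁ + d), (rb - r t))
        + ∫ t in (x₁ + d)..(x₁ + 2⁻¹), (rb - r t) := by
    rw [intervalIntegral.integral_add_adjacent_intervals (hint _ _) (hint _ _),
      intervalIntegral.integral_add_adjacent_intervals (hint _ _) (hint _ _)]
  have hI1 : 0 ≤ ∫ t in (x₁ - 2⁻¹)..(x₁ - d), (rb - r t) := by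
    apply intervalIntegral.integral_nonneg (by linarith)
    intro u _
    linarith [hcon u]
  have hI3 : 0 ≤ ∫ t in (x₁ + d)..(x₁ + 2⁻¹), (rb - r t) := by
    apply intervalIntegral.integral_nonneg (by linarith)
    intro u _
    linarith [hcon u]
  have hI2 : 2*d*ζ ≤ ∫ t in (x₁ - d)..(x₁ + d), (rb - r t) := by
    have hc : (∫ _ in (x₁ - d)..(x₁ + d), ζ) = 2*d*ζ := by
      rw [intervalIntegral.integral_const]
      simp only [smul_eq_mul]
      ring
    rw [← hc]
    apply intervalIntegral.integral_mono_on (by linarith)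
      ((continuous_const).intervalIntegrable _ _) (hint _ _)
    intro u hu
    apply window
    rw [abs_le]
    constructor <;> [linarith [hu.1]; linarith [hu.2]]
  have htot : 2*d*ζ ≤ 0 := by
    rw [← hzero, hsplit]
    linarith
  have : (0:ℝ) < 2*d*ζ := by positivity
  linarith



/-! ### Construction of the weight `w₀` -/

lemma exists_weight {r : ℝ → ℝ} (hr : Continuous r) (hrper : Function.Periodic r 1)
    (hrnc : ¬ ∃ c, ∀ x, r x = c) :
    ∃ w₀ : ℝ → ℝ, ContDiff ℝ 2 w₀ ∧ (∀ x, 0 < w₀ x) ∧ Function.Periodic w₀ 1 ∧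
      0 < ∫ t in (0:ℝ)..1, w₀ t * (r t - (∫ s in (0:ℝ)..1, r s)) := by
  obtain ⟨x₀, hx₀⟩ := exists_above_avg hr hrper hrnc
  set rb := ∫ s in (0:ℝ)..1, r s with hrb
  set e := (r x₀ - rb)/2 with hedef
  have he : 0 < e := by simp only [hedef]; linarith
  obtain ⟨d0, hd0pos, hd0⟩ := Metric.continuousAt_iff.mp (hr.continuousAt (x := x₀)) e he
  set θ := min (d0/2) 4⁻¹ with hθdef
  have hθpos : 0 < θ := lt_min (by linarith) (by norm_num)
  have hθ14 : θ ≤ 4⁻¹ := min_le_right _ _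
  have window : ∀ y, |y - x₀| ≤ θ → rb + e ≤ r y := by
    intro y hy
    have h2 : dist y x₀ < d0 := by
      rw [Real.dist_eq]
      calc |y - x₀| ≤ θ := hy
        _ ≤ d0/2 := min_le_left _ _
        _ < d0 := by linarith
    have h3 := hd0 h2
    rw [Real.dist_eq] at h3
    have h4 := (abs_lt.mp h3).1
    simp only [hedef] at *
    linarith
  set u := fun x : ℝ => Real.cos (2*π*(x - x₀)) - Real.cos (2*π*θ) with hudef
  set η := fun x => m3 (u x) with hηdef
  set w₀ := fun x => 1 + η x with hw₀def
  set u1 := fun x : ℝ => Real.sin (2*π*(x - x₀)) * (-(2*π)) with hu1def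
  set u2 := fun x : ℝ => Real.cos (2*π*(x - x₀)) * (2*π) * (-(2*π)) with hu2def
  have hu : ∀ x, HasDerivAt u (u1 x) x := by
    intro x
    have hlin : HasDerivAt (fun y : ℝ => 2*π*(y - x₀)) (2*π) x := by
      simpa using ((hasDerivAt_id x).sub_const x₀).const_mul (2*π)
    have hc := ((Real.hasDerivAt_cos (2*π*(x - x₀))).comp x hlin).sub_const
      (Real.cos (2*π*θ))
    have hval : -Real.sin (2*π*(x - x₀)) * (2*π) = u1 x := by simp only [hu1def]; ring
    rw [hval] at hc
    exact hc
  have hu1 : ∀ x, HasDerivAt u1 (u2 x) x := by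
    intro x
    have hlin : HasDerivAt (fun y : ℝ => 2*π*(y - x₀)) (2*π) x := by
      simpa using ((hasDerivAt_id x).sub_const x₀).const_mul (2*π)
    have hs := ((Real.hasDerivAt_sin (2*π*(x - x₀))).comp x hlin).mul_const (-(2*π))
    exact hs
  have hη1 : ∀ x, HasDerivAt η (m3d (u x) * u1 x) x :=
    fun x => (hasDerivAt_m3 (u x)).comp x (hu x)
  have hη2 : ∀ x, HasDerivAt (fun x => m3d (u x) * u1 x)
      ((m3dd (u x) * u1 x) * u1 x + m3d (u x) * u2 x) x :=
    fun x => ((hasDerivAt_m3d (u x)).comp x (hu x)).mul (hu1 x)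
  have hucont : Continuous u := by
    simp only [hudef]; fun_prop
  have hu1cont : Continuous u1 := by
    simp only [hu1def]; fun_prop
  have hu2cont : Continuous u2 := by
    simp only [hu2def]; fun_prop
  have hw₀C : ContDiff ℝ 2 w₀ := by
    apply contDiff_two_of_hasDerivAt (f1 := fun x => m3d (u x) * u1 x)
      (f2 := fun x => (m3dd (u x) * u1 x) * u1 x + m3d (u x) * u2 x)
    · intro x
      simpa [hw₀def] using (hη1 x).const_add 1
    · exact hη2
    · exact ((continuous_m3dd.comp hucont).mul hu1cont).mul hu1cont |>.add
        ((continuous_m3d.comp hucont).mul hu2cont)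
  have hw₀pos : ∀ x, 0 < w₀ x := by
    intro x
    have := m3_nonneg (u x)
    simp only [hw₀def, hηdef]
    linarith
  have huper : ∀ x, u (x + 1) = u x := by
    intro x
    simp only [hudef]
    rw [show 2*π*(x + 1 - x₀) = 2*π*(x - x₀) + 2*π by ring, Real.cos_add_two_pi]
  have hw₀per : Function.Periodic w₀ 1 := by
    intro x
    simp only [hw₀def, hηdef, huper x]
  refine ⟨w₀, hw₀C, hw₀pos, hw₀per, ?_⟩
  -- the integral
  have hηcont : Continuous η := continuous_m3.comp hucont
  have hIsplit : (∫ t in (0:ℝ)..1, w₀ t * (r t - rb))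
      = (∫ t in (0:ℝ)..1, (r t - rb)) + ∫ t in (0:ℝ)..1, η t * (r t - rb) := by
    rw [← intervalIntegral.integral_add (f := fun t => r t - rb) (g := fun t => η t * (r t - rb)) (((hr.sub continuous_const)).intervalIntegrable _ _)
      ((hηcont.mul (hr.sub continuous_const)).intervalIntegrable _ _)]
    apply intervalIntegral.integral_congr
    intro t _
    simp only [hw₀def]
    ring
  have hIzero : (∫ t in (0:ℝ)..1, (r t - rb)) = 0 := by
    rw [intervalIntegral.integral_sub (hr.intervalIntegrable _ _)
      (continuous_const.intervalIntegrable _ _)]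
    simp [hrb]
  have hprodcont : Continuous (fun t => η t * (r t - rb)) := hηcont.mul (hr.sub continuous_const)
  have hprodper : Function.Periodic (fun t => η t * (r t - rb)) 1 := by
    intro x
    simp only [hηdef, huper x, hrper x]
  have hshift : (∫ t in (0:ℝ)..1, η t * (r t - rb))
      = ∫ t in (x₀ - 2⁻¹)..(x₀ + 2⁻¹), η t * (r t - rb) := by
    have heq := hprodper.intervalIntegral_add_eq (x₀ - 2⁻¹) 0
    rw [show x₀ - 2⁻¹ + 1 = x₀ + 2⁻¹ by ring, zero_add] at heq
    exact heq.symm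
  -- pointwise facts
  have habs : ∀ t : ℝ, Real.cos (2*π*(t - x₀)) = Real.cos (2*π*|t - x₀|) := by
    intro t
    rw [← Real.cos_abs, abs_mul, abs_of_pos Real.two_pi_pos]
  have hθpi : 2*π*θ ≤ π := by nlinarith [Real.pi_pos]
  have hzero_out : ∀ t, θ ≤ |t - x₀| → |t - x₀| ≤ 2⁻¹ → η t = 0 := by
    intro t h1 h2
    apply m3_of_nonpos
    simp only [hudef]
    rw [habs t]
    have : Real.cos (2*π*|t - x₀|) ≤ Real.cos (2*π*θ) := by
      apply Real.cos_le_cos_of_nonneg_of_le_pi (by positivity)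
      · nlinarith [Real.pi_pos]
      · nlinarith [Real.pi_pos]
    linarith
  have hpos_in : ∀ t, |t - x₀| < θ → 0 < η t := by
    intro t h1
    apply m3_pos
    simp only [hudef]
    rw [habs t]
    have : Real.cos (2*π*θ) < Real.cos (2*π*|t - x₀|) := by
      apply Real.cos_lt_cos_of_nonneg_of_le_pi (by positivity) hθpi
      nlinarith [Real.pi_pos]
    linarith
  have hintp : ∀ a b : ℝ, IntervalIntegrable (fun t => η t * (r t - rb)) volume a b :=
    fun a b => hprodcont.intervalIntegrable _ _
  have hsplit3 : (∫ t in (x₀ - 2⁻¹)..(x₀ + 2⁻¹), η t * (r t - rb))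
      = (∫ t in (x₀ - 2⁻¹)..(x₀ - θ), η t * (r t - rb))
        + (∫ t in (x₀ - θ)..(x₀ + θ), η t * (r t - rb))
        + ∫ t in (x₀ + θ)..(x₀ + 2⁻¹), η t * (r t - rb) := by
    rw [intervalIntegral.integral_add_adjacent_intervals (hintp _ _) (hintp _ _),
      intervalIntegral.integral_add_adjacent_intervals (hintp _ _) (hintp _ _)]
  have hout1 : (∫ t in (x₀ - 2⁻¹)..(x₀ - θ), η t * (r t - rb)) = 0 := by
    rw [intervalIntegral.integral_congr (g := fun _ => (0:ℝ))]
    · simp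
    · intro t ht
      rw [Set.uIcc_of_le (by linarith)] at ht
      have h1 : θ ≤ |t - x₀| := by
        rw [abs_sub_comm, abs_of_nonneg (by linarith [ht.2])]
        linarith [ht.2]
      have h2 : |t - x₀| ≤ 2⁻¹ := by
        rw [abs_sub_comm, abs_of_nonneg (by linarith [ht.2])]
        linarith [ht.1]
      simp [hzero_out t h1 h2]
  have hout2 : (∫ t in (x₀ + θ)..(x₀ + 2⁻¹), η t * (r t - rb)) = 0 := by
    rw [intervalIntegral.integral_congr (g := fun _ => (0:ℝ))]
    · simp
    · intro t ht
      rw [Set.uIcc_of_le (by linarith)] at ht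
      have h1 : θ ≤ |t - x₀| := by
        rw [abs_of_nonneg (by linarith [ht.1])]
        linarith [ht.1]
      have h2 : |t - x₀| ≤ 2⁻¹ := by
        rw [abs_of_nonneg (by linarith [ht.1])]
        linarith [ht.2]
      simp [hzero_out t h1 h2]
  have hmid : 0 < ∫ t in (x₀ - θ)..(x₀ + θ), η t * (r t - rb) := by
    apply intervalIntegral.intervalIntegral_pos_of_pos_on (hintp _ _) _ (by linarith)
    intro t ht
    have habs' : |t - x₀| < θ := by
      rw [abs_lt]
      exact ⟨by linarith [ht.1], by linarith [ht.2]⟩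
    have h1 : 0 < η t := hpos_in t habs'
    have h2 : rb + e ≤ r t := window t habs'.le
    have : 0 < r t - rb := by linarith
    positivity
  rw [hIsplit, hIzero, hshift, hsplit3, hout1, hout2]
  simpa using hmid


lemma periodic_deriv {f : ℝ → ℝ} (hper : Function.Periodic f 1) :
    Function.Periodic (deriv f) 1 := by
  intro x
  have hcomp : (fun y => f (y + 1)) = f := funext fun y => hper y
  calc deriv f (x + 1) = deriv (fun y => f (y + 1)) x := (deriv_comp_add_const ..).symm
    _ = deriv f x := by rw [hcomp]

lemma intpos {F : ℝ → ℝ} (hF : Continuous F) (hFpos : ∀ x, 0 < F x) :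
    0 < ∫ t in (0:ℝ)..1, F t :=
  intervalIntegral.intervalIntegral_pos_of_pos_on (hF.intervalIntegrable _ _)
    (fun x _ => hFpos x) one_pos

/-- The operator `L_q^λ[r;D]` acting on C² functions `ψ`:
`(L_q^λ[r;D]ψ)(x) = D ψ'' + ((1+q)D' − 2λD) ψ' + (qD'' + λ²D − (1+q)λD' + r) ψ`. -/
def Lop (q lam : ℝ) (r D ψ : ℝ → ℝ) (x : ℝ) : ℝ :=
  D x * deriv (deriv ψ) x + ((1 + q) * deriv D x - 2 * lam * D x) * deriv ψ x +
    (q * deriv (deriv D) x + lam ^ 2 * D x - (1 + q) * lam * deriv D x + r x) * ψ x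

/-- `(k, ψ)` is a principal eigenpair of `L_q^λ[r;D]`: `ψ` is a positive, 1-periodic,
C² function with `L_q^λ[r;D]ψ = kψ`. -/
def IsEigenpair (q lam : ℝ) (r D : ℝ → ℝ) (k : ℝ) (ψ : ℝ → ℝ) : Prop :=
  ContDiff ℝ 2 ψ ∧ (∀ x, 0 < ψ x) ∧ Function.Periodic ψ 1 ∧
    ∀ x, Lop q lam r D ψ x = k * ψ x

/-- The Freidlin–Gärtner infimum `inf_{λ>0} k(λ)/λ`, as an extended real number. -/
def speed (k : ℝ → ℝ) : EReal := ⨅ l : {l : ℝ // 0 < l}, ((k l.1 / l.1 : ℝ) : EReal)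

set_option maxHeartbeats 2000000 in
theorem stmt_3 (r : ℝ → ℝ) (hr : Continuous r) (hrper : Function.Periodic r 1)
    (hrnc : ¬ ∃ c, ∀ x, r x = c) (q : ℝ) (hq : q ≠ 0) :
    ∃ D : ℝ → ℝ, ContDiff ℝ 2 D ∧ (∀ x, 0 < D x) ∧ Function.Periodic D 1 ∧
      ∀ (kq k₀ : ℝ) (ψ φ : ℝ → ℝ),
        IsEigenpair q 0 r D kq ψ → IsEigenpair 0 0 r D k₀ φ → k₀ < kq := by
  classical
  obtain ⟨w₀, hw₀C, hw₀pos, hw₀per, hIw⟩ := exists_weight hr hrper hrnc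
  set rb := ∫ s in (0:ℝ)..1, r s with hrbdef
  -- the exponent p with D₀ = exp p , w₀ = exp (−q p)
  set p := fun x => (-1/q) * Real.log (w₀ x) with hpdef
  have hpC : ContDiff ℝ 2 p :=
    contDiff_const.mul (hw₀C.log (fun x => (hw₀pos x).ne'))
  have hpper : Function.Periodic p 1 := fun x => by simp only [hpdef, hw₀per x]
  set p1 := deriv p with hp1def
  set p2 := deriv p1 with hp2def
  have hpdiff : ∀ x, HasDerivAt p (p1 x) x :=
    fun x => (hpC.differentiable (by norm_num) x).hasDerivAt
  have hp1diff : ∀ x, HasDerivAt p1 (p2 x) x :=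
    fun x => (deriv_differentiable_of_contDiff2 hpC x).hasDerivAt
  have hp1cont : Continuous p1 := (contDiff2_deriv_contDiff1 hpC).continuous
  have hp2cont : Continuous p2 := (contDiff2_deriv_contDiff1 hpC).continuous_deriv le_rfl
  have hp1per : Function.Periodic p1 1 := periodic_deriv hpper
  have hpcont : Continuous p := hpC.continuous
  have hw₀cont : Continuous w₀ := hw₀C.continuous
  have hwexp : ∀ x, w₀ x = Real.exp (-q * p x) := by
    intro x
    have : -q * p x = Real.log (w₀ x) := by
      simp only [hpdef]; field_simp
    rw [this, Real.exp_log (hw₀pos x)]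
  -- the constant δ
  have hIntw₀pos : 0 < ∫ t in (0:ℝ)..1, w₀ t := intpos hw₀C.continuous hw₀pos
  set δ := (∫ t in (0:ℝ)..1, w₀ t * (r t - rb)) / (3 * ∫ t in (0:ℝ)..1, w₀ t) with hδdef
  have hδpos : 0 < δ := div_pos hIw (by positivity)
  set f := fun x => rb + 3*δ - r x with hfdef
  have hfcont : Continuous f := by simp only [hfdef]; fun_prop
  have hfper : Function.Periodic f 1 := fun x => by simp only [hfdef, hrper x]
  have hwf : (∫ t in (0:ℝ)..1, w₀ t * f t) = 0 := by
    have h1 : ∀ t ∈ Set.uIcc (0:ℝ) 1, w₀ t * f t = (3*δ) * w₀ t - w₀ t * (r t - rb) := by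
      intro t _
      simp only [hfdef]; ring
    rw [intervalIntegral.integral_congr h1,
      intervalIntegral.integral_sub (f := fun t => 3*δ * w₀ t) (g := fun t => w₀ t * (r t - rb)) ((continuous_const.mul hw₀C.continuous).intervalIntegrable _ _)
        ((hw₀C.continuous.mul (hr.sub continuous_const)).intervalIntegrable _ _),
      intervalIntegral.integral_const_mul]
    simp only [hδdef]
    field_simp
    ring
  -- W, K, S, σ
  set W := fun x => ∫ t in (0:ℝ)..x, w₀ t * f t with hWdef
  have hwfcont : Continuous (fun t => w₀ t * f t) := hw₀C.continuous.mul hfcont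
  have hWderiv : ∀ x, HasDerivAt W (w₀ x * f x) x := hasDerivAt_primitive hwfcont
  have hWdiff : Differentiable ℝ W := fun x => (hWderiv x).differentiableAt
  have hWcont : Continuous W := hWdiff.continuous
  have hWper : Function.Periodic W 1 :=
    primitive_periodic hwfcont (fun x => by simp only [hw₀per x, hfper x]) hwf
  set E := fun x => Real.exp ((q-1) * p x) with hEdef
  have hEcont : Continuous E := Real.continuous_exp.comp (continuous_const.mul hpcont)
  have hEpos : ∀ x, 0 < E x := fun x => Real.exp_pos _
  have hEper : Function.Periodic E 1 := fun x => by simp only [hEdef, hpper x]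
  have hIntEpos : 0 < ∫ t in (0:ℝ)..1, E t := intpos hEcont hEpos
  set K := -(∫ t in (0:ℝ)..1, W t * E t) / (∫ t in (0:ℝ)..1, E t) with hKdef
  set S := fun x => (K + W x) * E x with hSdef
  have hScont : Continuous S := by simp only [hSdef]; fun_prop
  have hSper : Function.Periodic S 1 := fun x => by simp only [hSdef, hWper x, hEper x]
  have hSzero : (∫ t in (0:ℝ)..1, S t) = 0 := by
    have h1 : ∀ t ∈ Set.uIcc (0:ℝ) 1, S t = K * E t + W t * E t := by
      intro t _
      simp only [hSdef]; ring
    rw [intervalIntegral.integral_congr h1,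
      intervalIntegral.integral_add (f := fun t => K * E t) (g := fun t => W t * E t) ((continuous_const.mul hEcont).intervalIntegrable _ _)
        ((hWcont.mul hEcont).intervalIntegrable _ _),
      intervalIntegral.integral_const_mul, hKdef]
    field_simp
    ring
  set σ := fun x => ∫ t in (0:ℝ)..x, S t with hσdef
  have hσderiv : ∀ x, HasDerivAt σ (S x) x := hasDerivAt_primitive hScont
  have hσper : Function.Periodic σ 1 := primitive_periodic hScont hSper hSzero
  set S1 := fun x => w₀ x * f x * E x + (K + W x) * ((q-1) * p1 x * E x) with hS1def
  have hS1deriv : ∀ x, HasDerivAt S (S1 x) x := by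
    intro x
    have hE' : HasDerivAt E ((q-1) * p1 x * E x) x := by
      have := ((hpdiff x).const_mul (q-1)).exp
      simpa [hEdef, mul_comm] using this
    exact ((hWderiv x).const_add K).mul hE'
  have hS1cont : Continuous S1 := by
    simp only [hS1def]
    fun_prop
  have hσC : ContDiff ℝ 2 σ := contDiff_two_of_hasDerivAt hσderiv hS1deriv hS1cont
  -- R, cc, T, τ
  set dE := fun x => Real.exp (-p x) with hdEdef
  have hdEcont : Continuous dE := Real.continuous_exp.comp hpcont.neg
  have hdEpos : ∀ x, 0 < dE x := fun x => Real.exp_pos _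
  have hdEper : Function.Periodic dE 1 := fun x => by simp only [hdEdef, hpper x]
  have hIntdEpos : 0 < ∫ t in (0:ℝ)..1, dE t := intpos hdEcont hdEpos
  have hrbr_cont : Continuous (fun t => rb - r t) := by fun_prop
  have hrbr_zero : (∫ t in (0:ℝ)..1, (rb - r t)) = 0 := by
    rw [intervalIntegral.integral_sub (continuous_const.intervalIntegrable _ _)
      (hr.intervalIntegrable _ _)]
    simp [hrbdef]
  set R := fun x => ∫ t in (0:ℝ)..x, (rb - r t) with hRdef
  have hRderiv : ∀ x, HasDerivAt R (rb - r x) x := hasDerivAt_primitive hrbr_cont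
  have hRdiff : Differentiable ℝ R := fun x => (hRderiv x).differentiableAt
  have hRcont : Continuous R := hRdiff.continuous
  have hRper : Function.Periodic R 1 :=
    primitive_periodic hrbr_cont (fun x => by simp only [hrper x]) hrbr_zero
  set cc := -(∫ t in (0:ℝ)..1, R t * dE t) / (∫ t in (0:ℝ)..1, dE t) with hccdef
  set T := fun x => (cc + R x) * dE x with hTdef
  have hTcont : Continuous T := by simp only [hTdef]; fun_prop
  have hTper : Function.Periodic T 1 := fun x => by simp only [hTdef, hRper x, hdEper x]
  have hTzero : (∫ t in (0:ℝ)..1, T t) = 0 := by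
    have h1 : ∀ t ∈ Set.uIcc (0:ℝ) 1, T t = cc * dE t + R t * dE t := by
      intro t _
      simp only [hTdef]; ring
    rw [intervalIntegral.integral_congr h1,
      intervalIntegral.integral_add (f := fun t => cc * dE t) (g := fun t => R t * dE t) ((continuous_const.mul hdEcont).intervalIntegrable _ _)
        ((hRcont.mul hdEcont).intervalIntegrable _ _),
      intervalIntegral.integral_const_mul, hccdef]
    field_simp
    ring
  set τ := fun x => ∫ t in (0:ℝ)..x, T t with hτdef
  have hτderiv : ∀ x, HasDerivAt τ (T x) x := hasDerivAt_primitive hTcont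
  have hτper : Function.Periodic τ 1 := primitive_periodic hTcont hTper hTzero
  set T1 := fun x => (rb - r x) * dE x + (cc + R x) * (dE x * -(p1 x)) with hT1def
  have hT1deriv : ∀ x, HasDerivAt T (T1 x) x := by
    intro x
    have hdE' : HasDerivAt dE (dE x * -(p1 x)) x := by
      have := ((hpdiff x).neg).exp
      simpa [hdEdef] using this
    exact ((hRderiv x).const_add cc).mul hdE'
  have hT1cont : Continuous T1 := by
    simp only [hT1def]
    fun_prop
  have hτC : ContDiff ℝ 2 τ := contDiff_two_of_hasDerivAt hτderiv hT1deriv hT1cont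
  -- the constant A
  set Φ := fun x => Real.exp (p x) * T x^2 with hΦdef
  have hΦcont : Continuous Φ := (Real.continuous_exp.comp hpcont).mul (hTcont.pow 2)
  have hΦper : Function.Periodic Φ 1 := fun x => by simp only [hΦdef, hpper x, hTper x]
  obtain ⟨xM, hxMmax⟩ := periodic_exists_max hΦcont hΦper
  set Cc := Φ xM with hCcdef
  have hCc0 : 0 ≤ Cc := le_trans (by simp only [hΦdef]; positivity : (0:ℝ) ≤ Φ 0) (hxMmax 0)
  set A := Cc/δ + 1 with hAdef
  have hApos : 0 < A := by
    have : 0 ≤ Cc/δ := div_nonneg hCc0 hδpos.le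
    simp only [hAdef]; linarith
  have hCA : Cc ≤ δ * A := by
    have : δ * A = Cc + δ := by
      simp only [hAdef]
      field_simp
    rw [this]; linarith
  -- the diffusion D
  set D := fun x => A * Real.exp (p x) with hDdef
  have hDC : ContDiff ℝ 2 D := contDiff_const.mul (Real.contDiff_exp.comp hpC)
  have hDpos : ∀ x, 0 < D x := fun x => by
    simp only [hDdef]; positivity
  have hDper : Function.Periodic D 1 := fun x => by simp only [hDdef, hpper x]
  set D1 := fun x => A * (Real.exp (p x) * p1 x) with hD1def
  set D2 := fun x => A * ((Real.exp (p x) * p1 x) * p1 x + Real.exp (p x) * p2 x) with hD2def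
  have hDderiv : ∀ x, HasDerivAt D (D1 x) x := fun x => ((hpdiff x).exp).const_mul A
  have hD1deriv : ∀ x, HasDerivAt D1 (D2 x) x :=
    fun x => (((hpdiff x).exp).mul (hp1diff x)).const_mul A
  have hderivD : deriv D = D1 := funext fun x => (hDderiv x).deriv
  have hderivD2 : deriv (deriv D) = D2 := by
    rw [hderivD]; exact funext fun x => (hD1deriv x).deriv
  -- the test function g (lower bound side)
  set γ1 := fun x => -q * p1 x + S x / A with hγ1def
  set γ2 := fun x => -q * p2 x + S1 x / A with hγ2def
  set g := fun x => Real.exp (-q * p x + σ x / A) with hgdef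
  set g1 := fun x => g x * γ1 x with hg1def
  set g2 := fun x => g1 x * γ1 x + g x * γ2 x with hg2def
  have hgderiv : ∀ x, HasDerivAt g (g1 x) x := by
    intro x
    have := (((hpdiff x).const_mul (-q)).add ((hσderiv x).div_const A)).exp
    simpa [hgdef, hg1def, hγ1def] using this
  have hγ1deriv : ∀ x, HasDerivAt γ1 (γ2 x) x :=
    fun x => ((hp1diff x).const_mul (-q)).add ((hS1deriv x).div_const A)
  have hg1deriv : ∀ x, HasDerivAt g1 (g2 x) x :=
    fun x => (hgderiv x).mul (hγ1deriv x)
  have hgC : ContDiff ℝ 2 g :=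
    Real.contDiff_exp.comp ((contDiff_const.mul hpC).add (hσC.div_const A))
  have hgpos : ∀ x, 0 < g x := fun x => Real.exp_pos _
  have hgper : Function.Periodic g 1 := fun x => by simp only [hgdef, hpper x, hσper x]
  have hderivg : deriv g = g1 := funext fun x => (hgderiv x).deriv
  have hderivg2 : deriv (deriv g) = g2 := by
    rw [hderivg]; exact funext fun x => (hg1deriv x).deriv
  -- the test function h (upper bound side)
  set hh := fun x => Real.exp (τ x / A) with hhdef
  set hh1 := fun x => hh x * (T x / A) with hh1def
  set hh2 := fun x => hh1 x * (T x / A) + hh x * (T1 x / A) with hh2def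
  have hhderiv : ∀ x, HasDerivAt hh (hh1 x) x := by
    intro x
    have := ((hτderiv x).div_const A).exp
    simpa [hhdef, hh1def] using this
  have hh1deriv : ∀ x, HasDerivAt hh1 (hh2 x) x :=
    fun x => (hhderiv x).mul ((hT1deriv x).div_const A)
  have hhC : ContDiff ℝ 2 hh := Real.contDiff_exp.comp (hτC.div_const A)
  have hhpos : ∀ x, 0 < hh x := fun x => Real.exp_pos _
  have hhper : Function.Periodic hh 1 := fun x => by simp only [hhdef, hτper x]
  have hderivh : deriv hh = hh1 := funext fun x => (hhderiv x).deriv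
  have hderivh2 : deriv (deriv hh) = hh2 := by
    rw [hderivh]; exact funext fun x => (hh1deriv x).deriv
  -- exp relations
  have had : ∀ x, Real.exp (p x) * Real.exp (-p x) = 1 := by
    intro x
    rw [← Real.exp_add]; simp
  have hwE : ∀ x, w₀ x * E x = Real.exp (-p x) := by
    intro x
    rw [hwexp x]
    simp only [hEdef]
    rw [← Real.exp_add]
    congr 1
    ring
  -- key identity for g
  have hgkey : ∀ x, D x * g2 x + ((1 + q) * D1 x) * g1 x + (q * D2 x + r x) * g x
      = (rb + 3*δ + Real.exp (p x) * S x^2 / A) * g x := by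
    intro x
    have hS1x : S1 x = f x * Real.exp (-p x) + (q-1) * p1 x * S x := by
      simp only [hS1def, hSdef]
      rw [show w₀ x * f x * E x = f x * (w₀ x * E x) by ring, hwE x]
      ring
    have hfx : f x = (rb + 3*δ) - r x := by simp only [hfdef]
    have hcore := core_alg_q q A (Real.exp (p x)) (Real.exp (-p x)) (g x) (f x) (S x)
      (S1 x) (p1 x) (p2 x) (r x) (rb + 3*δ) hApos.ne' (had x) hS1x hfx
    simp only [hg2def, hg1def, hγ1def, hγ2def, hD1def, hD2def, hDdef]
    linear_combination hcore
  -- key identity for hh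
  have hhkey : ∀ x, D x * hh2 x + ((1 + 0) * D1 x) * hh1 x + (0 * D2 x + r x) * hh x
      = (rb + Real.exp (p x) * T x^2 / A) * hh x := by
    intro x
    have hT1x : T1 x = (rb - r x) * Real.exp (-p x) - p1 x * T x := by
      simp only [hT1def, hTdef, hdEdef]
      ring
    have hcore := core_alg_0 A (Real.exp (p x)) (Real.exp (-p x)) (hh x) (T x) (T1 x)
      (p1 x) (p2 x) (r x) rb hApos.ne' (had x) hT1x
    simp only [hh2def, hh1def, hD1def, hD2def, hDdef, hdEdef]
    linear_combination hcore
  -- conclusion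
  refine ⟨D, hDC, hDpos, hDper, ?_⟩
  rintro kq k₀ ψ φ ⟨hψC, hψpos, hψper, hψeig⟩ ⟨hφC, hφpos, hφper, hφeig⟩
  have heigq : ∀ x, D x * deriv (deriv ψ) x + ((1 + q) * deriv D x) * deriv ψ x
      + (q * deriv (deriv D) x + r x) * ψ x = kq * ψ x := by
    intro x
    have h := hψeig x
    simp only [Lop] at h
    linear_combination h
  have heig0 : ∀ x, D x * deriv (deriv φ) x + ((1 + 0) * deriv D x) * deriv φ x
      + (0 * deriv (deriv D) x + r x) * φ x = k₀ * φ x := by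
    intro x
    have h := hφeig x
    simp only [Lop] at h
    linear_combination h
  have hkq : rb + 3*δ ≤ kq := by
    apply eig_ge hDpos hgC hgpos hgper hψC hψpos hψper heigq
    intro x
    rw [hderivg2, hderivg, hderivD2, hderivD, hgkey x]
    have h1 : 0 ≤ Real.exp (p x) * S x^2 / A := by positivity
    exact mul_le_mul_of_nonneg_right (by linarith) (hgpos x).le
  have hk0 : k₀ ≤ rb + δ := by
    apply eig_le hDpos hhC hhpos hhper hφC hφpos hφper heig0
    intro x
    rw [hderivh2, hderivh, hderivD2, hderivD, hhkey x]
    have h1 : Real.exp (p x) * T x^2 ≤ Cc := hxMmax x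
    have h2 : Real.exp (p x) * T x^2 / A ≤ δ := by
      rw [div_le_iff₀ hApos]
      calc Real.exp (p x) * T x^2 ≤ Cc := h1
        _ ≤ δ * A := hCA
    exact mul_le_mul_of_nonneg_right (by linarith) (hhpos x).le
  linarith

end
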